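/- There is no 3-dimensional torsionless left Λ-module with simple socle. Precisely: if M is a left Λ-module with dim_k M = 3 which admits an injective Λ-linear map into a finite free module Λⁿ, then the submodule {m ∈ M : x·m = y·m = z·m = 0} (which is the socle of M, since x, y, z generate rad Λ and every simple Λ-module is isomorphic to k) has k-dimension at least 2. -/

import Mathlib

open CategoryTheory Limits Opposite

/-- The algebra `Λ = Λ(q)` of Ringel–Zhang: a `k`-algebra with distinguished elements
`x, y, z` satisfying the defining relations
`x² = y² = z² = 0`, `yz = 0`, `xy + q·yx = 0`, `xz = zx`, `zy = zx`,
and admitting the `k`-basis `{1, x, y, z, yx, zx}`.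
Any such algebra is canonically isomorphic to the quotient of the free algebra
`k⟨x,y,z⟩` by the two-sided ideal generated by these relations. -/
structure LambdaAlg (k : Type) [Field k] (q : k) (Λ : Type) [Ring Λ] [Algebra k Λ] :
    Type where
  x : Λ
  y : Λ
  z : Λ
  hxx : x * x = 0
  hyy : y * y = 0
  hzz : z * z = 0
  hyz : y * z = 0
  hxy : x * y + q • (y * x) = 0
  hxz : x * z - z * x = 0
  hzy : z * y - z * x = 0
  basis : Module.Basis (Fin 6) k Λ
  hb0 : basis 0 = 1
  hb1 : basis 1 = x
  hb2 : basis 2 = y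
  hb3 : basis 3 = z
  hb4 : basis 4 = y * x
  hb5 : basis 5 = z * x

namespace LambdaAlg

variable {k : Type} [Field k] {q : k} {Λ : Type} [Ring Λ] [Algebra k Λ]

/-- The element `ax + by + cz` of `Λ`. -/
def w (D : LambdaAlg k q Λ) (a b c : k) : Λ := a • D.x + b • D.y + c • D.z

/-- The left ideal `U(a,b,c) = Λ(ax+by+cz) + Λ·yx + Λ·zx` of `Λ`. -/
def U (D : LambdaAlg k q Λ) (a b c : k) : Submodule Λ Λ :=
  Submodule.span Λ {D.w a b c, D.y * D.x, D.z * D.x}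

/-- The left `Λ`-module `M(a,b,c) = Λ/U(a,b,c)`. -/
abbrev M (D : LambdaAlg k q Λ) (a b c : k) : Type := Λ ⧸ D.U a b c

/-- The right ideal `U′(a,b,c) = (ax+by+cz)Λ + yx·Λ + zx·Λ` of `Λ`,
viewed as a `Λᵐᵒᵖ`-submodule of `Λ`. -/
def U' (D : LambdaAlg k q Λ) (a b c : k) : Submodule Λᵐᵒᵖ Λ :=
  Submodule.span Λᵐᵒᵖ {D.w a b c, D.y * D.x, D.z * D.x}

/-- The right `Λ`-module `M′(a,b,c) = Λ/U′(a,b,c)` (a module over `Λᵐᵒᵖ`). -/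
abbrev M' (D : LambdaAlg k q Λ) (a b c : k) : Type := Λ ⧸ D.U' a b c

/-- The `k`-subspace `{m ∈ M : x·m = y·m = z·m = 0}` of a left `Λ`-module `M`;
since `x, y, z` generate `rad Λ` and every simple `Λ`-module is isomorphic to `k`,
this is the socle of `M`. -/
def ann (D : LambdaAlg k q Λ) (M : Type) [AddCommGroup M] [Module k M] [Module Λ M]
    [IsScalarTower k Λ M] : Submodule k M where
  carrier := {m | D.x • m = 0 ∧ D.y • m = 0 ∧ D.z • m = 0}
  add_mem' := by
    rintro a b ⟨h1, h2, h3⟩ ⟨g1, g2, g3⟩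
    simp [smul_add, h1, h2, h3, g1, g2, g3]
  zero_mem' := by simp
  smul_mem' := by
    rintro a m ⟨h1, h2, h3⟩
    refine ⟨?_, ?_, ?_⟩ <;> rw [smul_comm] <;> simp [h1, h2, h3]

/-- The submodule `(rad Λ)·M = x·M + y·M + z·M` of a left `Λ`-module `M`. -/
def radM (D : LambdaAlg k q Λ) (M : Type) [AddCommGroup M] [Module Λ M] :
    Submodule Λ M :=
  Submodule.span Λ
    (Set.range (fun m : M => D.x • m) ∪ Set.range (fun m : M => D.y • m) ∪
      Set.range (fun m : M => D.z • m))

end LambdaAlg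

namespace LambdaAlg

variable {k : Type} [Field k] {q : k} {Λ : Type} [Ring Λ] [Algebra k Λ]
variable (D : LambdaAlg k q Λ)

lemma xy' : D.x * D.y = -(q • (D.y * D.x)) :=
  eq_neg_of_add_eq_zero_left D.hxy

lemma xz' : D.x * D.z = D.z * D.x := sub_eq_zero.mp D.hxz

lemma zy' : D.z * D.y = D.z * D.x := sub_eq_zero.mp D.hzy

lemma x_yx : D.x * (D.y * D.x) = 0 := by
  rw [← mul_assoc, D.xy', neg_mul, smul_mul_assoc, mul_assoc, D.hxx, mul_zero,
    smul_zero, neg_zero]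

lemma x_zx : D.x * (D.z * D.x) = 0 := by
  rw [← mul_assoc, D.xz', mul_assoc, D.hxx, mul_zero]

lemma y_yx : D.y * (D.y * D.x) = 0 := by
  rw [← mul_assoc, D.hyy, zero_mul]

lemma y_zx : D.y * (D.z * D.x) = 0 := by
  rw [← mul_assoc, D.hyz, zero_mul]

lemma z_yx : D.z * (D.y * D.x) = 0 := by
  rw [← mul_assoc, D.zy', mul_assoc, D.hxx, mul_zero]

lemma z_zx : D.z * (D.z * D.x) = 0 := by
  rw [← mul_assoc, D.hzz, zero_mul]

lemma yx_x : (D.y * D.x) * D.x = 0 := by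
  rw [mul_assoc, D.hxx, mul_zero]

lemma yx_y : (D.y * D.x) * D.y = 0 := by
  rw [mul_assoc, D.xy', mul_neg, mul_smul_comm, ← mul_assoc, D.hyy, zero_mul,
    smul_zero, neg_zero]

lemma yx_z : (D.y * D.x) * D.z = 0 := by
  rw [mul_assoc, D.xz', ← mul_assoc, D.hyz, zero_mul]

lemma zx_x : (D.z * D.x) * D.x = 0 := by
  rw [mul_assoc, D.hxx, mul_zero]

lemma zx_y : (D.z * D.x) * D.y = 0 := by
  rw [mul_assoc, D.xy', mul_neg, mul_smul_comm, ← mul_assoc, D.zy', mul_assoc,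
    D.hxx, mul_zero, smul_zero, neg_zero]

lemma zx_z : (D.z * D.x) * D.z = 0 := by
  rw [mul_assoc, D.xz', ← mul_assoc, D.hzz, zero_mul]

lemma yx_yx : (D.y * D.x) * (D.y * D.x) = 0 := by
  rw [← mul_assoc, D.yx_y, zero_mul]

lemma yx_zx : (D.y * D.x) * (D.z * D.x) = 0 := by
  rw [← mul_assoc, D.yx_z, zero_mul]

lemma zx_yx : (D.z * D.x) * (D.y * D.x) = 0 := by
  rw [← mul_assoc, D.zx_y, zero_mul]

lemma zx_zx : (D.z * D.x) * (D.z * D.x) = 0 := by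
  rw [← mul_assoc, D.zx_z, zero_mul]

lemma repr_expand (s : Λ) :
    s = D.basis.repr s 0 • (1:Λ) + D.basis.repr s 1 • D.x + D.basis.repr s 2 • D.y
      + D.basis.repr s 3 • D.z + D.basis.repr s 4 • (D.y * D.x)
      + D.basis.repr s 5 • (D.z * D.x) := by
  have h := D.basis.sum_repr s
  rw [Fin.sum_univ_six, D.hb0, D.hb1, D.hb2, D.hb3, D.hb4, D.hb5] at h
  exact h.symm

lemma coords_zero {a b c d e f : k}
    (h : a • (1:Λ) + b • D.x + c • D.y + d • D.z + e • (D.y * D.x)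
      + f • (D.z * D.x) = 0) :
    a = 0 ∧ b = 0 ∧ c = 0 ∧ d = 0 ∧ e = 0 ∧ f = 0 := by
  have li := D.basis.linearIndependent
  rw [Fintype.linearIndependent_iff] at li
  have key := li ![a, b, c, d, e, f] (by
    rw [Fin.sum_univ_six]
    simpa [D.hb0, D.hb1, D.hb2, D.hb3, D.hb4, D.hb5] using h)
  exact ⟨key 0, key 1, key 2, key 3, key 4, key 5⟩

lemma x_mul (s : Λ) :
    D.x * s = D.basis.repr s 0 • D.x + (-(q * D.basis.repr s 2)) • (D.y * D.x)
      + D.basis.repr s 3 • (D.z * D.x) := by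
  conv_lhs => rw [D.repr_expand s]
  simp only [mul_add, mul_smul_comm, mul_one, D.hxx, D.xy', D.xz', D.x_yx, D.x_zx]
  module

lemma y_mul (s : Λ) :
    D.y * s = D.basis.repr s 0 • D.y + D.basis.repr s 1 • (D.y * D.x) := by
  conv_lhs => rw [D.repr_expand s]
  simp only [mul_add, mul_smul_comm, mul_one, D.hyy, D.hyz, D.y_yx, D.y_zx]
  module

lemma z_mul (s : Λ) :
    D.z * s = D.basis.repr s 0 • D.z
      + (D.basis.repr s 1 + D.basis.repr s 2) • (D.z * D.x) := by
  conv_lhs => rw [D.repr_expand s]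
  simp only [mul_add, mul_smul_comm, mul_one, D.hzz, D.zy', D.z_yx, D.z_zx]
  module

lemma yx_mul (s : Λ) : (D.y * D.x) * s = D.basis.repr s 0 • (D.y * D.x) := by
  conv_lhs => rw [D.repr_expand s]
  simp only [mul_add, mul_smul_comm, mul_one, D.yx_x, D.yx_y, D.yx_z, D.yx_yx, D.yx_zx]
  module

lemma zx_mul (s : Λ) : (D.z * D.x) * s = D.basis.repr s 0 • (D.z * D.x) := by
  conv_lhs => rw [D.repr_expand s]
  simp only [mul_add, mul_smul_comm, mul_one, D.zx_x, D.zx_y, D.zx_z, D.zx_yx, D.zx_zx]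
  module



lemma socle_coords {e f : k} (h : e • (D.y * D.x) + f • (D.z * D.x) = 0) :
    e = 0 ∧ f = 0 := by
  have h2 := D.coords_zero (a := 0) (b := 0) (c := 0) (d := 0) (e := e) (f := f)
    (by simp only [zero_smul, zero_add]; exact h)
  exact ⟨h2.2.2.2.2.1, h2.2.2.2.2.2⟩

lemma socle_eq {e f e' f' : k}
    (h : e • (D.y * D.x) + f • (D.z * D.x)
      = e' • (D.y * D.x) + f' • (D.z * D.x)) : e = e' ∧ f = f' := by
  have h0 : (e - e') • (D.y * D.x) + (f - f') • (D.z * D.x) = 0 := by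
    have e1 : (e - e') • (D.y * D.x) + (f - f') • (D.z * D.x)
        = (e • (D.y * D.x) + f • (D.z * D.x))
          - (e' • (D.y * D.x) + f' • (D.z * D.x)) := by module
    rw [e1, h, sub_self]
  have h2 := D.socle_coords h0
  exact ⟨sub_eq_zero.mp h2.1, sub_eq_zero.mp h2.2⟩

lemma ann_coords (hq : q ≠ 0) {s : Λ} (hx : D.x * s = 0) (hy : D.y * s = 0) :
    D.basis.repr s 0 = 0 ∧ D.basis.repr s 1 = 0 ∧ D.basis.repr s 2 = 0
      ∧ D.basis.repr s 3 = 0 := by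
  rw [D.x_mul] at hx
  rw [D.y_mul] at hy
  have h1 := D.coords_zero (a := 0) (c := 0) (d := 0)
    (b := D.basis.repr s 0) (e := -(q * D.basis.repr s 2)) (f := D.basis.repr s 3)
    (by simp only [zero_smul, zero_add, add_zero]; exact hx)
  have h2 := D.coords_zero (a := 0) (b := 0) (d := 0) (f := 0)
    (c := D.basis.repr s 0) (e := D.basis.repr s 1)
    (by simp only [zero_smul, zero_add, add_zero]; exact hy)
  refine ⟨h1.2.1, h2.2.2.2.2.1, ?_, h1.2.2.2.2.2⟩
  have h3 := h1.2.2.2.2.1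
  rw [neg_eq_zero] at h3
  rcases mul_eq_zero.mp h3 with h | h
  · exact absurd h hq
  · exact h

end LambdaAlg
/-- A module is indecomposable if it is nonzero and is not the direct sum of two
nonzero submodules. -/
def IsIndecomposable (R : Type) [Ring R] (M : Type) [AddCommGroup M] [Module R M] :
    Prop :=
  Nontrivial M ∧
    ∀ N₁ N₂ : Submodule R M, N₁ ⊓ N₂ = ⊥ → N₁ ⊔ N₂ = ⊤ → N₁ = ⊥ ∨ N₂ = ⊥

/-- A module is torsionless if it admits an injective linear map into a finite free
module. -/
def IsTorsionless (R : Type) [Ring R] (M : Type) [AddCommGroup M] [Module R M] : Prop :=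
  ∃ (n : ℕ) (f : M →ₗ[R] (Fin n → R)), Function.Injective f

/-- The canonical evaluation map `M → M** = Hom_{Λᵒᵖ}(Hom_Λ(M, Λ), Λ)`,
sending `m` to `f ↦ f m`. -/
def evalMap (Λ : Type) [Ring Λ] (M : Type) [AddCommGroup M] [Module Λ M] :
    M → ((M →ₗ[Λ] Λ) →ₗ[Λᵐᵒᵖ] Λ) := fun m =>
  { toFun := fun f => f m
    map_add' := fun _ _ => rfl
    map_smul' := fun _ _ => rfl }

/-- The transformation `ω′(a,b,c) = (a, q⁻¹b, −((a+q⁻¹b)/a)·c)` on triples. -/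
def omegaPrime {k : Type} [Field k] (q : k) (t : k × k × k) : k × k × k :=
  (t.1, q⁻¹ * t.2.1, -((t.1 + q⁻¹ * t.2.1) / t.1) * t.2.2)

/-- There is no 3-dimensional torsionless left `Λ`-module with simple socle: the
socle `{m : x·m = y·m = z·m = 0}` of a 3-dimensional torsionless module has
`k`-dimension at least 2. -/

theorem statement3 (k : Type) [Field k] (q : k) (hq : q ≠ 0)
    (Λ : Type) [Ring Λ] [Algebra k Λ] (D : LambdaAlg k q Λ)
    (M : Type) [AddCommGroup M] [Module k M] [Module Λ M] [IsScalarTower k Λ M]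
    (hdim : Module.finrank k M = 3) (htor : IsTorsionless Λ M) :
    2 ≤ Module.finrank k ↥(D.ann M) := by
  classical
  obtain ⟨n, f, hf⟩ := htor
  have hfd : FiniteDimensional k M :=
    Module.finite_of_finrank_pos (by rw [hdim]; norm_num)
  have hfj : ∀ (a : Λ) (m : M) (j : Fin n), f (a • m) j = a * f m j := by
    intro a m j; rw [map_smul]; rfl
  have f_ksmul : ∀ (a : k) (m : M), f (a • m) = a • f m := by
    intro a m
    rw [← algebraMap_smul Λ a m, map_smul, algebraMap_smul]
  have hf0 : ∀ m : M, f m = 0 → m = 0 := by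
    intro m hm; apply hf; rw [hm, map_zero]
  have hyxne : D.y * D.x ≠ 0 := D.hb4 ▸ D.basis.ne_zero 4
  by_cases hyx0 : ∀ m : M, (D.y * D.x) • m = 0
  · -- Case 2 : (rad²Λ)·M = 0, i.e. f(M) ⊆ (rad Λ)ⁿ.
    have hc0 : ∀ (m : M) (j : Fin n), D.basis.repr (f m j) 0 = 0 := by
      intro m j
      have h1 : (D.y * D.x) * f m j = 0 := by
        rw [← hfj, hyx0 m, map_zero]; rfl
      rw [D.yx_mul] at h1
      exact (smul_eq_zero.mp h1).resolve_right hyxne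
    have hzx0 : ∀ m : M, (D.z * D.x) • m = 0 := by
      intro m
      apply hf0
      funext j
      rw [hfj, D.zx_mul, hc0, zero_smul]; rfl
    have hXann : ∀ m : M, D.x • m ∈ D.ann M := by
      intro m
      refine ⟨?_, ?_, ?_⟩
      · rw [smul_smul, D.hxx, zero_smul]
      · rw [smul_smul]; exact hyx0 m
      · rw [smul_smul]; exact hzx0 m
    have hYann : ∀ m : M, D.y • m ∈ D.ann M := by
      intro m
      refine ⟨?_, ?_, ?_⟩
      · rw [smul_smul, D.xy', neg_smul, smul_assoc, hyx0 m, smul_zero, neg_zero]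
      · rw [smul_smul, D.hyy, zero_smul]
      · rw [smul_smul, D.zy']; exact hzx0 m
    have hZann : ∀ m : M, D.z • m ∈ D.ann M := by
      intro m
      refine ⟨?_, ?_, ?_⟩
      · rw [smul_smul, D.xz']; exact hzx0 m
      · rw [smul_smul, D.hyz, zero_smul]
      · rw [smul_smul, D.hzz, zero_smul]
    have hcoords : ∀ m ∈ D.ann M, ∀ j : Fin n,
        D.basis.repr (f m j) 1 = 0 ∧ D.basis.repr (f m j) 2 = 0 ∧
          D.basis.repr (f m j) 3 = 0 := by
      rintro m ⟨h1, h2, h3⟩ j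
      have hx' : D.x * f m j = 0 := by rw [← hfj, h1, map_zero]; rfl
      have hy' : D.y * f m j = 0 := by rw [← hfj, h2, map_zero]; rfl
      have h4 := D.ann_coords hq hx' hy'
      exact ⟨h4.2.1, h4.2.2.1, h4.2.2.2⟩
    set F : M →ₗ[k] (Fin n → Λ) := LinearMap.restrictScalars k f with hF
    set co : Fin 6 → ((Fin n → Λ) →ₗ[k] (Fin n → k)) := fun i =>
      LinearMap.pi (fun j => (D.basis.coord i).comp (LinearMap.proj j)) with hco
    set ψ : M →ₗ[k] ((Fin n → k) × ((Fin n → k) × (Fin n → k))) :=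
      ((co 1).comp F).prod (((co 2).comp F).prod ((co 3).comp F)) with hψ
    have ψapp : ∀ m : M, ψ m = (fun j => D.basis.repr (f m j) 1,
        fun j => D.basis.repr (f m j) 2, fun j => D.basis.repr (f m j) 3) :=
      fun m => rfl
    have hker : LinearMap.ker ψ = D.ann M := by
      ext m
      rw [LinearMap.mem_ker, ψapp, Prod.ext_iff, Prod.ext_iff]
      constructor
      · rintro ⟨e1, e2, e3⟩
        have c1 : ∀ j, D.basis.repr (f m j) 1 = 0 := fun j => congrFun e1 j
        have c2 : ∀ j, D.basis.repr (f m j) 2 = 0 := fun j => congrFun e2 j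
        have c3 : ∀ j, D.basis.repr (f m j) 3 = 0 := fun j => congrFun e3 j
        refine ⟨?_, ?_, ?_⟩
        · apply hf0; funext j
          rw [hfj, D.x_mul, hc0, c2, c3]; simp
        · apply hf0; funext j
          rw [hfj, D.y_mul, hc0, c1]; simp
        · apply hf0; funext j
          rw [hfj, D.z_mul, hc0, c1, c2]; simp
      · intro hm
        refine ⟨funext fun j => ?_, funext fun j => ?_, funext fun j => ?_⟩
        · exact (hcoords m hm j).1
        · exact (hcoords m hm j).2.1
        · exact (hcoords m hm j).2.2
    by_cases hbot : D.ann M = ⊥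
    · exfalso
      have hall : ∀ m : M, m = 0 := by
        intro m
        have h1 : D.x • m = 0 := by
          have := hXann m; rw [hbot, Submodule.mem_bot] at this; exact this
        have h2 : D.y • m = 0 := by
          have := hYann m; rw [hbot, Submodule.mem_bot] at this; exact this
        have h3 : D.z • m = 0 := by
          have := hZann m; rw [hbot, Submodule.mem_bot] at this; exact this
        have h4 : m ∈ D.ann M := ⟨h1, h2, h3⟩
        rw [hbot, Submodule.mem_bot] at h4; exact h4
      have hss : Subsingleton M := subsingleton_of_forall_eq 0 fun m => hall m
      rw [Module.finrank_zero_of_subsingleton] at hdim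
      omega
    · by_contra hlt
      push_neg at hlt
      have hann1 : Module.finrank k ↥(D.ann M) ≤ 1 := by omega
      obtain ⟨s, hsann, hsne⟩ := (Submodule.ne_bot_iff _).mp hbot
      have hsle : Submodule.span k {s} ≤ D.ann M := by
        rw [Submodule.span_le, Set.singleton_subset_iff]; exact hsann
      have hspan : Submodule.span k {s} = D.ann M :=
        Submodule.eq_of_le_of_finrank_le hsle
          (by rw [finrank_span_singleton hsne]; exact hann1)
      have hfs : ∀ j : Fin n, f s j = D.basis.repr (f s j) 4 • (D.y * D.x)
          + D.basis.repr (f s j) 5 • (D.z * D.x) := by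
        intro j
        have hx' : D.x * f s j = 0 := by rw [← hfj, hsann.1, map_zero]; rfl
        have hy' : D.y * f s j = 0 := by rw [← hfj, hsann.2.1, map_zero]; rfl
        have h4 := D.ann_coords hq hx' hy'
        conv_lhs => rw [D.repr_expand (f s j)]
        rw [h4.1, h4.2.1, h4.2.2.1, h4.2.2.2, zero_smul, zero_smul, zero_smul,
          zero_smul, zero_add, zero_add, zero_add, zero_add]
      have key : ∀ m : M, ∃ lam mu nu : k,
          (∀ j, D.basis.repr (f m j) 1 = lam * D.basis.repr (f s j) 4 ∧
            lam * D.basis.repr (f s j) 5 = 0) ∧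
          (∀ j, mu * D.basis.repr (f s j) 4 = 0 ∧
            D.basis.repr (f m j) 1 + D.basis.repr (f m j) 2
              = mu * D.basis.repr (f s j) 5) ∧
          (∀ j, -(q * D.basis.repr (f m j) 2) = nu * D.basis.repr (f s j) 4 ∧
            D.basis.repr (f m j) 3 = nu * D.basis.repr (f s j) 5) := by
        intro m
        obtain ⟨lam, hlam⟩ := Submodule.mem_span_singleton.mp
          (by rw [hspan]; exact hYann m)
        obtain ⟨mu, hmu⟩ := Submodule.mem_span_singleton.mp
          (by rw [hspan]; exact hZann m)
        obtain ⟨nu, hnu⟩ := Submodule.mem_span_singleton.mp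
          (by rw [hspan]; exact hXann m)
        refine ⟨lam, mu, nu, fun j => ?_, fun j => ?_, fun j => ?_⟩
        · have h1 : D.y * f m j = lam • f s j := by
            rw [← hfj, ← hlam, f_ksmul]; rfl
          rw [D.y_mul, hc0 m j, zero_smul, zero_add, hfs j, smul_add, smul_smul,
            smul_smul] at h1
          have h2 := D.socle_eq (e := D.basis.repr (f m j) 1) (f := 0)
            (e' := lam * D.basis.repr (f s j) 4) (f' := lam * D.basis.repr (f s j) 5)
            (by rw [zero_smul, add_zero]; exact h1)
          exact ⟨h2.1, h2.2.symm⟩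
        · have h1 : D.z * f m j = mu • f s j := by
            rw [← hfj, ← hmu, f_ksmul]; rfl
          rw [D.z_mul, hc0 m j, zero_smul, zero_add, hfs j, smul_add, smul_smul,
            smul_smul] at h1
          have h2 := D.socle_eq (e := 0)
            (f := D.basis.repr (f m j) 1 + D.basis.repr (f m j) 2)
            (e' := mu * D.basis.repr (f s j) 4) (f' := mu * D.basis.repr (f s j) 5)
            (by rw [zero_smul, zero_add]; exact h1)
          exact ⟨h2.1.symm, h2.2⟩
        · have h1 : D.x * f m j = nu • f s j := by
            rw [← hfj, ← hnu, f_ksmul]; rfl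
          rw [D.x_mul, hc0 m j, zero_smul, zero_add, hfs j, smul_add, smul_smul,
            smul_smul] at h1
          exact D.socle_eq h1
      have hrange : ∃ v : (Fin n → k) × ((Fin n → k) × (Fin n → k)),
          LinearMap.range ψ ≤ Submodule.span k {v} := by
        by_cases hE : ∀ j, D.basis.repr (f s j) 4 = 0
        · refine ⟨(0, 0, fun j => D.basis.repr (f s j) 5), ?_⟩
          rintro t ⟨m, rfl⟩
          obtain ⟨lam, mu, nu, hy', hz', hx'⟩ := key m
          rw [Submodule.mem_span_singleton]
          refine ⟨nu, ?_⟩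
          simp only [ψapp, Prod.smul_mk, smul_zero, Prod.mk.injEq]
          refine ⟨funext fun j => ?_, funext fun j => ?_, funext fun j => ?_⟩
          · have h1 := (hy' j).1; rw [hE j, mul_zero] at h1
            simp [h1]
          · have h1 := (hx' j).1; rw [hE j, mul_zero, neg_eq_zero] at h1
            have h2 : D.basis.repr (f m j) 2 = 0 := by
              rcases mul_eq_zero.mp h1 with h | h
              · exact absurd h hq
              · exact h
            simp [h2]
          · have h1 := (hx' j).2
            simp [h1, Pi.smul_apply, smul_eq_mul]
        · push_neg at hE
          obtain ⟨j0, hj0⟩ := hE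
          refine ⟨(fun j => D.basis.repr (f s j) 4,
            fun j => -D.basis.repr (f s j) 4,
            fun j => q * D.basis.repr (f s j) 5), ?_⟩
          rintro t ⟨m, rfl⟩
          obtain ⟨lam, mu, nu, hy', hz', hx'⟩ := key m
          have hmu0 : mu = 0 := by
            rcases mul_eq_zero.mp (hz' j0).1 with h | h
            · exact h
            · exact absurd h hj0
          have hc2 : ∀ j, D.basis.repr (f m j) 2
              = -(lam * D.basis.repr (f s j) 4) := by
            intro j
            have h1 := (hz' j).2
            rw [hmu0, zero_mul] at h1
            have h2 := (hy' j).1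
            linear_combination h1 - h2
          have hnu : nu = q * lam := by
            have h1 := (hx' j0).1
            rw [hc2 j0] at h1
            have h3 : nu * D.basis.repr (f s j0) 4
                = (q * lam) * D.basis.repr (f s j0) 4 := by rw [← h1]; ring
            exact mul_right_cancel₀ hj0 h3
          rw [Submodule.mem_span_singleton]
          refine ⟨lam, ?_⟩
          simp only [ψapp, Prod.smul_mk, Prod.mk.injEq]
          refine ⟨funext fun j => ?_, funext fun j => ?_, funext fun j => ?_⟩
          · rw [Pi.smul_apply, smul_eq_mul]
            exact ((hy' j).1).symm
          · rw [Pi.smul_apply, smul_eq_mul, hc2 j]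
            ring
          · rw [Pi.smul_apply, smul_eq_mul, (hx' j).2, hnu]
            ring
      obtain ⟨v, hv⟩ := hrange
      have hrk : Module.finrank k ↥(LinearMap.range ψ) ≤ 1 := by
        calc Module.finrank k ↥(LinearMap.range ψ)
            ≤ Module.finrank k ↥(Submodule.span k {v}) := Submodule.finrank_mono hv
          _ ≤ 1 := by
            by_cases hv0 : v = 0
            · rw [hv0, Submodule.span_zero_singleton, finrank_bot]
              omega
            · rw [finrank_span_singleton hv0]
      have hrn := LinearMap.finrank_range_add_finrank_ker ψ
      rw [hker, hdim] at hrn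
      omega
  · -- Case 1 : some (yx)•m ≠ 0
    push_neg at hyx0
    obtain ⟨m, hm⟩ := hyx0
    set s1 : M := (D.y * D.x) • m with hs1
    set s2 : M := (D.z * D.x) • m with hs2
    have hs1ann : s1 ∈ D.ann M := by
      refine ⟨?_, ?_, ?_⟩ <;> rw [hs1, smul_smul]
      · rw [D.x_yx, zero_smul]
      · rw [D.y_yx, zero_smul]
      · rw [D.z_yx, zero_smul]
    have hs2ann : s2 ∈ D.ann M := by
      refine ⟨?_, ?_, ?_⟩ <;> rw [hs2, smul_smul]
      · rw [D.x_zx, zero_smul]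
      · rw [D.y_zx, zero_smul]
      · rw [D.z_zx, zero_smul]
    have hfm : ∃ j, D.basis.repr (f m j) 0 ≠ 0 := by
      by_contra hall
      push_neg at hall
      apply hm
      apply hf0
      funext j
      rw [hfj, D.yx_mul, hall j, zero_smul]; rfl
    obtain ⟨j0, hj0⟩ := hfm
    have hind : ∀ a b : k, a • s1 + b • s2 = 0 → a = 0 ∧ b = 0 := by
      intro a b hab
      have h1 : a • f s1 + b • f s2 = 0 := by
        rw [← f_ksmul, ← f_ksmul, ← map_add, hab, map_zero]
      have h2 := congrFun h1 j0
      simp only [Pi.add_apply, Pi.smul_apply, Pi.zero_apply] at h2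
      have e1 : f s1 j0 = D.basis.repr (f m j0) 0 • (D.y * D.x) := by
        rw [hs1, hfj, D.yx_mul]
      have e2 : f s2 j0 = D.basis.repr (f m j0) 0 • (D.z * D.x) := by
        rw [hs2, hfj, D.zx_mul]
      rw [e1, e2, smul_smul, smul_smul] at h2
      have h3 := D.socle_coords h2
      constructor
      · rcases mul_eq_zero.mp h3.1 with h | h
        · exact h
        · exact absurd h hj0
      · rcases mul_eq_zero.mp h3.2 with h | h
        · exact h
        · exact absurd h hj0
    have hli : LinearIndependent k ![s1, s2] := by
      rw [linearIndependent_fin2]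
      simp only [Matrix.cons_val_one, Matrix.head_cons, Matrix.cons_val_zero]
      constructor
      · intro h0
        have := (hind 0 1 (by rw [zero_smul, one_smul, zero_add]; exact h0)).2
        exact one_ne_zero this
      · intro a ha
        have := (hind 1 (-a) (by rw [one_smul, neg_smul, ← ha]; abel)).1
        exact one_ne_zero this
    have hsp : Submodule.span k {s1, s2} ≤ D.ann M := by
      rw [Submodule.span_le, Set.insert_subset_iff, Set.singleton_subset_iff]
      exact ⟨hs1ann, hs2ann⟩
    have hrg : Set.range ![s1, s2] = {s1, s2} := by
      ext t
      simp only [Set.mem_range, Fin.exists_fin_two, Matrix.cons_val_zero,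
        Matrix.cons_val_one, Matrix.head_cons, Set.mem_insert_iff,
        Set.mem_singleton_iff]
      tauto
    have hcard : Module.finrank k ↥(Submodule.span k {s1, s2}) = 2 := by
      have h2 := finrank_span_eq_card hli
      rwa [hrg, Fintype.card_fin] at h2
    exact hcard ▸ Submodule.finrank_mono hsp
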